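/- Fix integers m > k ≥ 1 and n ≥ 1. For X ∈ ℝ^{m×n}, rank(X) ≤ k if and only if there exists U ∈ ℝ^{m×(m−k)} with UᵀU = I_{m−k} and UᵀX = 0. Consequently, for a linear map A : ℝ^{m×n} → ℝ^p and b ∈ ℝ^p, the function f(X) = (1/2)‖AX − b‖² + δ_{{rank(·)≤k}}(X) satisfies f(X) = inf_U { (1/2)‖AX − b‖² + δ_{D̂}(X,U) }, where D̂ = {(X,U) : UᵀX = 0, UᵀU = I_{m−k}}. -/

import Mathlib

open Matrix

private lemma stmt17_bwd (m k n : ℕ) (X : Matrix (Fin m) (Fin n) ℝ) (hkm : k ≤ m)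
    (U : Matrix (Fin m) (Fin (m - k)) ℝ) (h1 : Uᵀ * U = 1) (h2 : Uᵀ * X = 0) :
    X.rank ≤ k := by
  have hsurj : Function.Surjective (Uᵀ).mulVecLin := by
    intro v
    exact ⟨U.mulVecLin v, by
      have := congrArg Matrix.mulVecLin h1
      rw [Matrix.mulVecLin_mul] at this
      simpa using congrFun (congrArg DFunLike.coe this) v⟩
  have hrange : LinearMap.range (Uᵀ).mulVecLin = ⊤ := LinearMap.range_eq_top.mpr hsurj
  have hker : Module.finrank ℝ (LinearMap.ker (Uᵀ).mulVecLin) = k := by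
    have := LinearMap.finrank_range_add_finrank_ker (Uᵀ).mulVecLin
    rw [hrange] at this
    simp [finrank_top, Module.finrank_pi] at this
    omega
  have hle : LinearMap.range X.mulVecLin ≤ LinearMap.ker (Uᵀ).mulVecLin := by
    rintro _ ⟨v, rfl⟩
    have := congrArg Matrix.mulVecLin h2
    rw [Matrix.mulVecLin_mul] at this
    simpa [LinearMap.mem_ker] using congrFun (congrArg DFunLike.coe this) v
  calc X.rank = Module.finrank ℝ (LinearMap.range X.mulVecLin) := rfl
    _ ≤ Module.finrank ℝ (LinearMap.ker (Uᵀ).mulVecLin) := Submodule.finrank_mono hle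
    _ = k := hker

private lemma stmt17_fwd (m k n : ℕ) (hkm : k < m) (X : Matrix (Fin m) (Fin n) ℝ)
    (hX : X.rank ≤ k) :
    ∃ U : Matrix (Fin m) (Fin (m - k)) ℝ, Uᵀ * U = 1 ∧ Uᵀ * X = 0 := by
  open Module in
  set L : (Fin m → ℝ) ≃ₗ[ℝ] EuclideanSpace ℝ (Fin m) :=
    (WithLp.linearEquiv 2 ℝ (Fin m → ℝ)).symm with hL
  set K : Submodule ℝ (EuclideanSpace ℝ (Fin m)) :=
    (LinearMap.range X.mulVecLin).map (L : (Fin m → ℝ) →ₗ[ℝ] EuclideanSpace ℝ (Fin m)) with hK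
  have hKfin : finrank ℝ K = X.rank := LinearEquiv.finrank_map_eq L _
  have hdim : finrank ℝ K + finrank ℝ Kᗮ = m := by
    have := Submodule.finrank_add_finrank_orthogonal (K := K)
    simpa [finrank_euclideanSpace_fin] using this
  have hge : m - k ≤ finrank ℝ Kᗮ := by omega
  set B := stdOrthonormalBasis ℝ Kᗮ with hB
  set u : Fin (m - k) → EuclideanSpace ℝ (Fin m) :=
    fun j => (B (Fin.castLE hge j) : EuclideanSpace ℝ (Fin m)) with hu
  have huo : ∀ a b, (inner ℝ (u a) (u b) : ℝ) = if a = b then 1 else 0 := by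
    intro a b
    have : (inner ℝ (u a) (u b) : ℝ) = inner ℝ (B (Fin.castLE hge a)) (B (Fin.castLE hge b)) := rfl
    rw [this]
    rcases eq_or_ne a b with h | h
    · simp [h, orthonormal_iff_ite.mp B.orthonormal]
    · rw [orthonormal_iff_ite.mp B.orthonormal]
      simp [Fin.castLE_injective hge |>.ne h, h]
  refine ⟨Matrix.of (fun i j => u j i), ?_, ?_⟩
  · ext a b
    have := huo a b
    simp only [PiLp.inner_apply, RCLike.inner_apply, starRingEnd_apply, star_trivial] at this
    simp [Matrix.mul_apply, Matrix.one_apply, this]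
    rw [← this]; exact Finset.sum_congr rfl fun i _ => mul_comm _ _
  · ext a j
    have hmem : L (X.mulVec (Pi.single j 1)) ∈ K :=
      ⟨X.mulVec (Pi.single j 1), ⟨Pi.single j 1, rfl⟩, rfl⟩
    have h0 : (inner ℝ (L (X.mulVec (Pi.single j 1))) (u a) : ℝ) = 0 :=
      (Submodule.mem_orthogonal K (u a)).mp (B (Fin.castLE hge a)).2 _ hmem
    simp only [PiLp.inner_apply, RCLike.inner_apply, starRingEnd_apply, star_trivial] at h0
    simp only [WithLp.linearEquiv_symm_apply, hL] at h0
    simp only [Matrix.mulVec_single, mul_one] at h0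
    simp only [Matrix.mul_apply, Matrix.transpose_apply, Matrix.of_apply, Matrix.zero_apply]
    rw [← h0]
    exact Finset.sum_congr rfl fun i _ => by
      change _ = (u a).ofLp i * (X i j * 1); rw [mul_one]

/-- `rank X ≤ k` iff there is `U` with orthonormal columns and `UᵀX = 0`;
consequently the rank-constrained least squares function is an inf-projection. -/
theorem stmt17 (m k n p : ℕ) (hk : 1 ≤ k) (hkm : k < m) (hn : 1 ≤ n)
    (A : Matrix (Fin m) (Fin n) ℝ →ₗ[ℝ] EuclideanSpace ℝ (Fin p))
    (b : EuclideanSpace ℝ (Fin p)) :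
    (∀ X : Matrix (Fin m) (Fin n) ℝ,
      X.rank ≤ k ↔ ∃ U : Matrix (Fin m) (Fin (m - k)) ℝ, Uᵀ * U = 1 ∧ Uᵀ * X = 0) ∧
    ∀ X : Matrix (Fin m) (Fin n) ℝ,
      (if X.rank ≤ k then (((1/2) * ‖A X - b‖ ^ 2 : ℝ) : EReal) else (⊤ : EReal)) =
        ⨅ U : Matrix (Fin m) (Fin (m - k)) ℝ,
          (if Uᵀ * U = 1 ∧ Uᵀ * X = 0 then (((1/2) * ‖A X - b‖ ^ 2 : ℝ) : EReal)
            else (⊤ : EReal)) := by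
  have key : ∀ X : Matrix (Fin m) (Fin n) ℝ,
      X.rank ≤ k ↔ ∃ U : Matrix (Fin m) (Fin (m - k)) ℝ, Uᵀ * U = 1 ∧ Uᵀ * X = 0 :=
    fun X => ⟨fun h => stmt17_fwd m k n hkm X h,
      fun ⟨U, h1, h2⟩ => stmt17_bwd m k n X hkm.le U h1 h2⟩
  refine ⟨key, fun X => ?_⟩
  by_cases h : X.rank ≤ k
  · rw [if_pos h]
    obtain ⟨U0, hU0⟩ := (key X).mp h
    refine le_antisymm ?_ ?_
    · refine le_iInf fun U => ?_
      split_ifs <;> simp [le_top]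
    · refine le_trans (iInf_le _ U0) ?_
      rw [if_pos hU0]
  · rw [if_neg h]
    symm
    rw [iInf_eq_top]
    intro U
    rw [if_neg]
    intro hc
    exact h ((key X).mpr ⟨U, hc⟩)
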